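/- arXiv:2002.07946 — 5 statements merged into one kernel-verified Lean document; each statement's English description precedes it below -/
import Mathlib

section
/- Let R be a commutative ring and A an Azumaya algebra over R, i.e., A is a finitely generated projective faithful R-module and the natural map A ⊗_R A^op → End_R(A) (sending a ⊗ b to the map x ↦ a x b) is an isomorphism. Then for every commutative R-algebra S, the base change A ⊗_R S is an Azumaya algebra over S. -/
open TensorProduct MulOpposite

variable (R A : Type*) [CommRing R] [Ring A] [Algebra R A]

/-- Right multiplication as an algebra map from the opposite algebra to endomorphisms. -/
noncomputable def mulRightAlgHom : Aᵐᵒᵖ →ₐ[R] Module.End R A where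
  toFun b := LinearMap.mulRight R b.unop
  map_one' := by ext a; simp
  map_mul' x y := by ext a; simp [mul_assoc]
  map_zero' := by ext a; simp
  map_add' x y := by ext a; simp [mul_add]
  commutes' r := by
    ext a
    simp [Module.algebraMap_end_apply, MulOpposite.algebraMap_apply, ← Algebra.commutes,
      Algebra.smul_def]

/-- The sandwich map `A ⊗_R A^op → End_R(A)`, sending `a ⊗ b` to `x ↦ a * x * b`. -/
noncomputable def sandwichMap : A ⊗[R] Aᵐᵒᵖ →ₐ[R] Module.End R A :=
  Algebra.TensorProduct.lift (Algebra.lmul R A) (mulRightAlgHom R A)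
    (fun a b => by
      show _ = _
      ext x
      simp [mulRightAlgHom, mul_assoc])

/-- `A` is an Azumaya algebra over `R` if it is a finitely generated projective faithful
`R`-module and the sandwich map `A ⊗_R A^op → End_R(A)` is bijective. -/
def IsAzumayaAlgebra : Prop :=
  Module.Finite R A ∧ Module.Projective R A ∧ FaithfulSMul R A ∧
    Function.Bijective (sandwichMap R A)

/-! ### Auxiliary material -/

lemma sandwichMap_tmul_apply (a : A) (b : Aᵐᵒᵖ) (m : A) :
    sandwichMap R A (a ⊗ₜ b) m = a * (m * unop b) := by
  simp [sandwichMap, mulRightAlgHom, Algebra.TensorProduct.lift_tmul, Module.End.mul_apply,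
    Algebra.coe_lmul_eq_mul, mul_assoc]

section Eta

variable (S : Type*) [CommRing S] [Algebra R S]
variable (M N : Type*) [AddCommGroup M] [Module R M] [AddCommGroup N] [Module R N]

/-- The base-change map `S ⊗ Hom_R(M, N) → Hom_S(S ⊗ M, S ⊗ N)`. -/
noncomputable def etaMap : S ⊗[R] (M →ₗ[R] N) →ₗ[S] (S ⊗[R] M →ₗ[S] S ⊗[R] N) :=
  (LinearMap.baseChangeHom R S M N).liftBaseChange S

/-- Evaluation at `m` as a linear map. -/
def evAt (m : M) : (M →ₗ[R] N) →ₗ[R] N where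
  toFun g := g m
  map_add' := by simp
  map_smul' := by simp

lemma etaMap_apply_one_tmul (x : S ⊗[R] (M →ₗ[R] N)) (m : M) :
    etaMap R S M N x (1 ⊗ₜ m) = LinearMap.lTensor S (evAt R M N m) x := by
  induction x using TensorProduct.induction_on with
  | zero => simp
  | tmul s g => simp [etaMap, evAt, smul_tmul']
  | add x y hx hy => simp [hx, hy]

lemma ext_one_tmul {W : Type*} [AddCommGroup W] [Module R W] [Module S W] [IsScalarTower R S W]
    (h₁ h₂ : S ⊗[R] M →ₗ[S] W) (H : ∀ m : M, h₁ (1 ⊗ₜ m) = h₂ (1 ⊗ₜ m)) : h₁ = h₂ :=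
  (LinearMap.liftBaseChangeEquiv S).symm.injective (LinearMap.ext H)

variable {M} in
lemma etaMap_natural {M' : Type*} [AddCommGroup M'] [Module R M'] (f : M' →ₗ[R] M)
    (x : S ⊗[R] (M →ₗ[R] N)) :
    etaMap R S M' N (LinearMap.lTensor S (LinearMap.lcomp R N f) x)
      = (etaMap R S M N x).comp (f.baseChange S) := by
  induction x using TensorProduct.induction_on with
  | zero => simp
  | tmul s g =>
    simp only [LinearMap.lTensor_tmul, etaMap, LinearMap.liftBaseChange_tmul, LinearMap.smul_comp]
    congr 1
    ext m
    simp
  | add x y hx hy => simp [hx, hy, LinearMap.add_comp]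

lemma coordinate_bijective (n : ℕ) :
    Function.Bijective (fun (x : S ⊗[R] ((Fin n → R) →ₗ[R] N)) =>
      (fun i => LinearMap.lTensor S (evAt R (Fin n → R) N (Pi.single i 1)) x)) := by
  have key : (fun (x : S ⊗[R] ((Fin n → R) →ₗ[R] N)) =>
      (fun i => LinearMap.lTensor S (evAt R (Fin n → R) N (Pi.single i 1)) x))
      = (TensorProduct.piRight R S S (fun _ : Fin n => N)) ∘
        (LinearEquiv.lTensor S (LinearEquiv.piRing R N (Fin n) R)) := by
    funext x
    induction x using TensorProduct.induction_on with
    | zero => funext i; simp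
    | tmul s g =>
      funext i
      simp [evAt, LinearEquiv.lTensor]
    | add x y hx hy =>
      funext i
      simp only [map_add, Pi.add_apply] at hx hy ⊢
      rw [congrFun hx i, congrFun hy i]
      simp
  rw [key]
  exact (TensorProduct.piRight R S S _).bijective.comp (LinearEquiv.lTensor S _).bijective

lemma etaMap_bijective_free (n : ℕ) :
    Function.Bijective (etaMap R S (Fin n → R) N) := by
  constructor
  · intro x y hxy
    apply (coordinate_bijective R S N n).injective
    funext i
    simp only [← etaMap_apply_one_tmul, hxy]
  · intro h
    obtain ⟨x, hx⟩ := (coordinate_bijective R S N n).surjective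
      (fun i => h (1 ⊗ₜ Pi.single i 1))
    refine ⟨x, ?_⟩
    apply ext_one_tmul
    intro m
    have h1 : ((etaMap R S (Fin n → R) N x).restrictScalars R).comp
        ((TensorProduct.mk R S (Fin n → R)) 1)
        = (h.restrictScalars R).comp ((TensorProduct.mk R S (Fin n → R)) 1) := by
      apply Module.Basis.ext (Pi.basisFun R (Fin n))
      intro i
      simp only [LinearMap.coe_comp, Function.comp_apply, LinearMap.coe_restrictScalars,
        Pi.basisFun_apply, TensorProduct.mk_apply]
      rw [etaMap_apply_one_tmul]
      exact congrFun hx i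
    exact LinearMap.congr_fun h1 m

lemma lcomp_cancel {M' : Type*} [AddCommGroup M'] [Module R M']
    (i : M →ₗ[R] M') (p : M' →ₗ[R] M) (hpi : p ∘ₗ i = LinearMap.id) :
    (LinearMap.lcomp R N i) ∘ₗ (LinearMap.lcomp R N p) = LinearMap.id := by
  ext g m
  have : p (i m) = m := LinearMap.congr_fun hpi m
  simp [this]

lemma etaMap_bijective [Module.Finite R M] [Module.Projective R M] :
    Function.Bijective (etaMap R S M N) := by
  obtain ⟨n, p, hp⟩ := Module.Finite.exists_fin' R M
  obtain ⟨i, hi⟩ := Module.projective_lifting_property p LinearMap.id hp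
  have cancel : ∀ x : S ⊗[R] (M →ₗ[R] N),
      LinearMap.lTensor S (LinearMap.lcomp R N i)
        (LinearMap.lTensor S (LinearMap.lcomp R N p) x) = x := by
    intro x
    rw [← LinearMap.comp_apply, ← LinearMap.lTensor_comp, lcomp_cancel R M N i p hi,
      LinearMap.lTensor_id, LinearMap.id_apply]
  constructor
  · intro x y hxy
    have h1 : LinearMap.lTensor S (LinearMap.lcomp R N p) x
        = LinearMap.lTensor S (LinearMap.lcomp R N p) y :=
      (etaMap_bijective_free R S N n).injective
        (by rw [etaMap_natural, etaMap_natural, hxy])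
    rw [← cancel x, ← cancel y, h1]
  · intro h
    obtain ⟨x₀, hx₀⟩ := (etaMap_bijective_free R S N n).surjective (h.comp (p.baseChange S))
    refine ⟨LinearMap.lTensor S (LinearMap.lcomp R N i) x₀, ?_⟩
    rw [etaMap_natural, hx₀, LinearMap.comp_assoc, ← LinearMap.baseChange_comp, hi,
      LinearMap.baseChange_id, LinearMap.comp_id]

end Eta

section Faithful

lemma exists_dual_sum_eq_one [Module.Finite R A] [Module.Projective R A] [FaithfulSMul R A] :
    ∃ (n : ℕ) (f : Fin n → (A →ₗ[R] R)) (a : Fin n → A),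
      (1 : R) ∈ Ideal.span (Set.range fun ij : Fin n × Fin n => f ij.1 (a ij.2)) := by
  classical
  obtain ⟨n, p, hp⟩ := Module.Finite.exists_fin' R A
  obtain ⟨i, hi⟩ := Module.projective_lifting_property p LinearMap.id hp
  set f : Fin n → (A →ₗ[R] R) := fun j => (LinearMap.proj j) ∘ₗ i with hf
  set a : Fin n → A := fun j => p (Pi.single j 1) with ha
  refine ⟨n, f, a, ?_⟩
  have dual : ∀ x : A, x = ∑ j, f j x • a j := by
    intro x
    have hx : p (i x) = x := by
      have := LinearMap.congr_fun hi x
      simpa using this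
    conv_lhs => rw [← hx]
    have h1 : i x = ∑ j, (i x j) • (Pi.single j (1 : R) : Fin n → R) := by
      conv_lhs => rw [← Finset.univ_sum_single (i x)]
      refine Finset.sum_congr rfl fun j _ => ?_
      ext k
      by_cases hk : k = j
      · subst hk; simp
      · simp [Pi.single_eq_of_ne hk]
    rw [h1, map_sum]
    refine Finset.sum_congr rfl fun j _ => ?_
    rw [map_smul]
    rfl
  set T : Ideal R := Ideal.span (Set.range fun ij : Fin n × Fin n => f ij.1 (a ij.2)) with hT
  have hmem : ∀ (j : Fin n) (x : A), f j x ∈ T := by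
    intro j x
    have h2 : f j x = ∑ k, f k x * f j (a k) := by
      conv_lhs => rw [dual x, map_sum]
      exact Finset.sum_congr rfl fun k _ => by rw [map_smul, smul_eq_mul]
    rw [h2]
    exact Ideal.sum_mem _ fun k _ => Ideal.mul_mem_left _ _ (Ideal.subset_span ⟨(j, k), rfl⟩)
  have hfg : T.FG := Submodule.fg_span (Set.finite_range _)
  have hidem : IsIdempotentElem T := by
    refine le_antisymm Ideal.mul_le_right ?_
    conv_lhs => rw [hT]
    rw [Ideal.span_le]
    rintro r ⟨ij, rfl⟩
    show (f ij.1) (a ij.2) ∈ T * T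
    have h3 : f ij.1 (a ij.2) = ∑ k, f k (a ij.2) * f ij.1 (a k) := by
      conv_lhs => rw [dual (a ij.2), map_sum]
      exact Finset.sum_congr rfl fun k _ => by rw [map_smul, smul_eq_mul]
    rw [h3]
    exact Ideal.sum_mem _ fun k _ => Ideal.mul_mem_mul
      (Ideal.subset_span ⟨(k, ij.2), rfl⟩) (Ideal.subset_span ⟨(ij.1, k), rfl⟩)
  obtain ⟨e, he, hspan⟩ := (T.isIdempotentElem_iff_of_fg hfg).mp hidem
  have hTe : ∀ r ∈ T, (1 - e) * r = 0 := by
    intro r hr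
    rw [hspan] at hr
    obtain ⟨c, rfl⟩ := Ideal.mem_span_singleton'.mp hr
    rw [sub_mul, one_mul, mul_comm c e, ← mul_assoc, he.eq, sub_self]
  have hann : ∀ x : A, (1 - e) • x = (0 : R) • x := by
    intro x
    rw [zero_smul]
    conv_lhs => rw [dual x]
    rw [Finset.smul_sum]
    refine Finset.sum_eq_zero fun j _ => ?_
    rw [smul_smul, hTe _ (hmem j x), zero_smul]
  have he1 : (1 : R) - e = 0 := FaithfulSMul.eq_of_smul_eq_smul hann
  have : e = 1 := by linear_combination -he1
  show (1 : R) ∈ T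
  rw [hspan, ← this]
  exact Submodule.mem_span_singleton_self e

lemma faithfulSMul_baseChange [Module.Finite R A] [Module.Projective R A] [FaithfulSMul R A]
    (S : Type*) [CommRing S] [Algebra R S] : FaithfulSMul S (S ⊗[R] A) := by
  obtain ⟨n, f, a, hone⟩ := exists_dual_sum_eq_one R A
  constructor
  intro s₁ s₂ hss
  have hs : ∀ x : S ⊗[R] A, (s₁ - s₂) • x = 0 := fun x => by rw [sub_smul, hss x, sub_self]
  set s := s₁ - s₂ with hsdef
  have key : ∀ j k : Fin n, f j (a k) • s = 0 := by
    intro j k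
    have h0 : s ⊗ₜ[R] (a k) = (0 : S ⊗[R] A) := by
      have := hs ((1 : S) ⊗ₜ a k)
      rwa [smul_tmul', smul_eq_mul, mul_one] at this
    have : f j (a k) • s = (TensorProduct.rid R S) (LinearMap.lTensor S (f j) (s ⊗ₜ a k)) := by
      simp
    rw [this, h0, map_zero, map_zero]
  have hZ : Ideal.span (Set.range fun ij : Fin n × Fin n => f ij.1 (a ij.2))
      ≤ LinearMap.ker (LinearMap.toSpanSingleton R S s) := by
    rw [Ideal.span_le]
    rintro r ⟨ij, rfl⟩
    simpa [LinearMap.mem_ker] using key ij.1 ij.2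
  have h1 : (1 : R) • s = 0 := hZ hone
  rw [one_smul] at h1
  exact sub_eq_zero.mp h1

end Faithful

section Main

variable (S : Type*) [CommRing S] [Algebra R S]

/-- The base change of the opposite algebra, as a module. -/
noncomputable def psiEquiv : S ⊗[R] Aᵐᵒᵖ ≃ₗ[S] (S ⊗[R] A)ᵐᵒᵖ :=
  (LinearEquiv.baseChange R S Aᵐᵒᵖ A (opLinearEquiv R).symm).trans
    (opLinearEquiv S)

/-- The canonical additive bijection `S ⊗ (A ⊗ Aᵒᵖ) ≃ (S ⊗ A) ⊗_S (S ⊗ A)ᵒᵖ`. -/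
noncomputable def phiEquiv :
    S ⊗[R] (A ⊗[R] Aᵐᵒᵖ) ≃+ ((S ⊗[R] A) ⊗[S] (S ⊗[R] A)ᵐᵒᵖ) :=
  ((TensorProduct.assoc R S A Aᵐᵒᵖ).symm.toAddEquiv).trans
    (((TensorProduct.AlgebraTensorModule.cancelBaseChange R S S (S ⊗[R] A)
        Aᵐᵒᵖ).symm.toAddEquiv).trans
      ((LinearEquiv.lTensor (R := S) (S ⊗[R] A) (psiEquiv R A S)).toAddEquiv))

lemma phiEquiv_tmul (s : S) (a : A) (b : Aᵐᵒᵖ) :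
    phiEquiv R A S (s ⊗ₜ (a ⊗ₜ b)) = (s ⊗ₜ a) ⊗ₜ[S] (op ((1 : S) ⊗ₜ b.unop)) := by
  show (LinearEquiv.lTensor (R := S) (S ⊗[R] A) (psiEquiv R A S))
      ((AlgebraTensorModule.cancelBaseChange R S S (S ⊗[R] A) Aᵐᵒᵖ).symm
        ((TensorProduct.assoc R S A Aᵐᵒᵖ).symm (s ⊗ₜ[R] (a ⊗ₜ[R] b)))) = _
  rw [TensorProduct.assoc_symm_tmul, AlgebraTensorModule.cancelBaseChange_symm_tmul]
  show TensorProduct.congr (LinearEquiv.refl S (S ⊗[R] A)) (psiEquiv R A S) _ = _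
  rw [TensorProduct.congr_tmul, LinearEquiv.refl_apply]
  congr 1

set_option synthInstance.maxHeartbeats 1000000 in
set_option maxHeartbeats 1000000 in
lemma key_identity (x : S ⊗[R] (A ⊗[R] Aᵐᵒᵖ)) :
    sandwichMap S (S ⊗[R] A) (phiEquiv R A S x)
      = etaMap R S A A (LinearMap.lTensor S (sandwichMap R A).toLinearMap x) := by
  induction x using TensorProduct.induction_on with
  | zero => rw [AddEquiv.map_zero]; simp only [map_zero]
  | add x y hx hy => rw [AddEquiv.map_add]; simp only [map_add, hx, hy]
  | tmul s z =>
    induction z using TensorProduct.induction_on with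
    | zero => rw [tmul_zero, AddEquiv.map_zero]; simp only [map_zero]
    | add z w hz hw => rw [tmul_add, AddEquiv.map_add]; simp only [map_add, hz, hw]
    | tmul a b =>
      rw [phiEquiv_tmul]
      apply LinearMap.ext
      intro w
      induction w using TensorProduct.induction_on with
      | zero => simp
      | add u v hu hv => simp only [map_add, hu, hv]
      | tmul t m =>
        have lhs : sandwichMap S (S ⊗[R] A) ((s ⊗ₜ a) ⊗ₜ[S] (op ((1 : S) ⊗ₜ b.unop))) (t ⊗ₜ m)
            = (s * t) ⊗ₜ (a * (m * unop b)) := by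
          rw [sandwichMap_tmul_apply]
          simp [Algebra.TensorProduct.tmul_mul_tmul, mul_assoc]
        rw [lhs]
        simp only [etaMap, LinearMap.lTensor_tmul, LinearMap.liftBaseChange_tmul,
          LinearMap.smul_apply, LinearMap.baseChangeHom_apply, LinearMap.baseChange_tmul,
          AlgHom.toLinearMap_apply, sandwichMap_tmul_apply, smul_tmul', smul_eq_mul]

end Main

/-- The Azumaya condition is stable under arbitrary base change: if `A` is Azumaya over `R`
and `S` is any commutative `R`-algebra, then `S ⊗_R A` is Azumaya over `S`. -/
theorem isAzumayaAlgebra_baseChange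
    (h : IsAzumayaAlgebra R A)
    (S : Type*) [CommRing S] [Algebra R S] :
    IsAzumayaAlgebra S (S ⊗[R] A) := by
  obtain ⟨hF, hP, hfa, hbij⟩ := h
  refine ⟨inferInstance, inferInstance, faithfulSMul_baseChange R A S, ?_⟩
  have hb : Function.Bijective (etaMap R S A A) := etaMap_bijective R S A A
  have hlt : Function.Bijective (LinearMap.lTensor S (sandwichMap R A).toLinearMap) := by
    have : ⇑(LinearMap.lTensor S (sandwichMap R A).toLinearMap)
        = ⇑(LinearEquiv.lTensor S (LinearEquiv.ofBijective (sandwichMap R A).toLinearMap hbij)) :=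
      rfl
    rw [this]
    exact (LinearEquiv.lTensor S _).bijective
  have heq : ⇑(sandwichMap S (S ⊗[R] A))
      = (⇑(etaMap R S A A) ∘ ⇑(LinearMap.lTensor S (sandwichMap R A).toLinearMap))
        ∘ ⇑(phiEquiv R A S).symm := by
    funext y
    conv_lhs => rw [← (phiEquiv R A S).apply_symm_apply y]
    exact key_identity R A S ((phiEquiv R A S).symm y)
  rw [heq]
  exact (hb.comp hlt).comp (phiEquiv R A S).symm.bijective
end

section
/- Let R → S be a faithfully flat homomorphism of commutative rings and let A be an R-algebra which is finitely generated projective as an R-module. If A ⊗_R S is an Azumaya algebra over S, then A is an Azumaya algebra over R. -/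
open TensorProduct MulOpposite

variable (R A : Type*) [CommRing R] [Ring A] [Algebra R A]

section Descent

variable {R : Type*} [CommRing R] (S : Type*) [CommRing S] [Algebra R S]
  [Module.FaithfullyFlat R S]
  {M N : Type*} [AddCommGroup M] [Module R M] [AddCommGroup N] [Module R N]

lemma injective_of_lTensor_injective (f : M →ₗ[R] N)
    (h : Function.Injective (f.lTensor S)) : Function.Injective f := by
  have h0 : ∀ z : S ⊗[R] (LinearMap.ker f), z = 0 := by
    intro z
    have hz : (LinearMap.lTensor S (LinearMap.ker f).subtype) z = 0 := by
      apply h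
      rw [map_zero, ← LinearMap.comp_apply, ← LinearMap.lTensor_comp]
      have hc : f ∘ₗ (LinearMap.ker f).subtype = 0 := by
        ext m; exact m.2
      rw [hc, LinearMap.lTensor_zero, LinearMap.zero_apply]
    exact Module.Flat.lTensor_preserves_injective_linearMap (M := S)
      (LinearMap.ker f).subtype (Submodule.injective_subtype _) (by simpa using hz)
  have hsub : Subsingleton (S ⊗[R] (LinearMap.ker f)) := ⟨fun x y => by rw [h0 x, h0 y]⟩
  have : Subsingleton (LinearMap.ker f) :=
    Module.FaithfullyFlat.lTensor_reflects_triviality R S _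
  rw [← LinearMap.ker_eq_bot]
  rw [eq_bot_iff]
  intro x hx
  simpa using congrArg Subtype.val (Subsingleton.elim (⟨x, hx⟩ : LinearMap.ker f) 0)

lemma surjective_of_lTensor_surjective (f : M →ₗ[R] N)
    (h : Function.Surjective (f.lTensor S)) : Function.Surjective f := by
  set Q := N ⧸ LinearMap.range f
  have h0 : ∀ z : S ⊗[R] Q, z = 0 := by
    intro z
    obtain ⟨w, hw⟩ := LinearMap.lTensor_surjective S
      (g := (LinearMap.range f).mkQ) (Submodule.mkQ_surjective _) z
    obtain ⟨v, hv⟩ := h w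
    rw [← hw, ← hv, ← LinearMap.comp_apply, ← LinearMap.lTensor_comp]
    have hc : (LinearMap.range f).mkQ ∘ₗ f = 0 := by
      ext m
      simp [Submodule.Quotient.mk_eq_zero]
    rw [hc, LinearMap.lTensor_zero, LinearMap.zero_apply]
  have hsub : Subsingleton (S ⊗[R] Q) := ⟨fun x y => by rw [h0 x, h0 y]⟩
  have hQ : Subsingleton Q := Module.FaithfullyFlat.lTensor_reflects_triviality R S Q
  intro n
  have : (LinearMap.range f).mkQ n = 0 := Subsingleton.elim _ _
  rwa [Submodule.mkQ_apply, Submodule.Quotient.mk_eq_zero] at this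

lemma bijective_of_lTensor_bijective (f : M →ₗ[R] N)
    (h : Function.Bijective (f.lTensor S)) : Function.Bijective f :=
  ⟨injective_of_lTensor_injective S f h.1, surjective_of_lTensor_surjective S f h.2⟩

end Descent

section Phi

variable {R S : Type*} [CommRing R] [CommRing S] [Algebra R S]
  {M N P : Type*} [AddCommGroup M] [Module R M] [AddCommGroup N] [Module R N]
  [AddCommGroup P] [Module R P]

lemma tensorProduct_apply_one_tmul (x : S ⊗[R] (M →ₗ[R] N)) (m : M) :
    LinearMap.tensorProduct R S M N x (1 ⊗ₜ m)
      = LinearMap.lTensor S (LinearMap.applyₗ m) x := by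
  induction x with
  | zero => simp
  | tmul s f =>
    simp only [LinearMap.tensorProduct_apply, TensorProduct.liftAux_tmul]
    simp [LinearMap.baseChangeHom, LinearMap.smul_apply, LinearMap.baseChange_tmul,
      smul_tmul']
  | add x y hx hy =>
    simp only [map_add, LinearMap.add_apply, hx, hy]

lemma piRight_lTensor_apply {ι : Type*} [Fintype ι] [DecidableEq ι]
    (g : P →ₗ[R] (ι → N)) (x : S ⊗[R] P) (j : ι) :
    TensorProduct.piRight R R S (fun _ : ι => N) (LinearMap.lTensor S g x) j
      = LinearMap.lTensor S ((LinearMap.proj j) ∘ₗ g) x := by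
  induction x with
  | zero => simp
  | tmul s p => simp
  | add x y hx hy =>
    simp only [map_add, TensorProduct.piRight_apply, Pi.add_apply] at hx hy ⊢
    rw [hx, hy]

lemma tensorProduct_injective_free (n : ℕ) :
    Function.Injective (LinearMap.tensorProduct R S (Fin n → R) N) := by
  rw [injective_iff_map_eq_zero]
  intro x hx
  set E : ((Fin n → R) →ₗ[R] N) ≃ₗ[R] (Fin n → N) := LinearEquiv.piRing R N (Fin n) R
  have hcomp : ∀ j : Fin n, (LinearMap.proj j) ∘ₗ E.toLinearMap
      = LinearMap.applyₗ (Pi.single j (1 : R)) := by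
    intro j; ext f; simp [E]
  have hE : LinearMap.lTensor S E.toLinearMap x = 0 := by
    apply (TensorProduct.piRight R R S (fun _ : Fin n => N)).injective
    rw [map_zero]
    funext j
    rw [piRight_lTensor_apply, hcomp j, ← tensorProduct_apply_one_tmul, hx]
    simp
  have : x = LinearMap.lTensor S (E.symm.toLinearMap ∘ₗ E.toLinearMap) x := by
    have : E.symm.toLinearMap ∘ₗ E.toLinearMap = LinearMap.id := by
      ext f; simp
    rw [this, LinearMap.lTensor_id, LinearMap.id_apply]
  rw [this, LinearMap.lTensor_comp, LinearMap.comp_apply, hE, map_zero]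

lemma tensorProduct_injective [Module.Finite R M] [Module.Projective R M] :
    Function.Injective (LinearMap.tensorProduct R S M M) := by
  obtain ⟨n, p, i, hp, hi, hpi⟩ := Module.Finite.exists_comp_eq_id_of_projective R M
  rw [injective_iff_map_eq_zero]
  intro x hx
  set η : (M →ₗ[R] M) →ₗ[R] ((Fin n → R) →ₗ[R] (Fin n → R)) :=
    { toFun := fun h => i ∘ₗ h ∘ₗ p
      map_add' := fun h₁ h₂ => by ext v; simp
      map_smul' := fun r h => by ext v; simp }
  set ρ : ((Fin n → R) →ₗ[R] (Fin n → R)) →ₗ[R] (M →ₗ[R] M) :=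
    { toFun := fun h => p ∘ₗ h ∘ₗ i
      map_add' := fun h₁ h₂ => by ext v; simp
      map_smul' := fun r h => by ext v; simp }
  have hpi' : ∀ m : M, p (i m) = m := fun m => by
    simpa using congrArg (fun f => f m) (congrArg (fun f => f.toFun) hpi)
  have key : ∀ y : S ⊗[R] (M →ₗ[R] M), LinearMap.tensorProduct R S (Fin n → R) (Fin n → R)
      (LinearMap.lTensor S η y)
      = (i.baseChange S) ∘ₗ (LinearMap.tensorProduct R S M M y) ∘ₗ (p.baseChange S) := by
    intro y
    induction y with
    | zero => simp
    | tmul s f =>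
      simp only [LinearMap.lTensor_tmul, LinearMap.tensorProduct_apply,
        TensorProduct.liftAux_tmul]
      ext v
      simp [η, LinearMap.baseChangeHom, LinearMap.baseChange_comp]
    | add x' y' hx' hy' =>
      simp only [map_add, LinearMap.add_apply, hx', hy', LinearMap.comp_add,
        LinearMap.add_comp]
  have key := key x
  rw [hx] at key
  simp only [LinearMap.comp_zero, LinearMap.zero_comp] at key
  have hη : LinearMap.lTensor S η x = 0 := tensorProduct_injective_free n
    (by rw [key, map_zero])
  have hρη : ρ ∘ₗ η = LinearMap.id := by
    ext h m
    simp [ρ, η, hpi']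
  have : x = LinearMap.lTensor S (ρ ∘ₗ η) x := by
    rw [hρη, LinearMap.lTensor_id, LinearMap.id_apply]
  rw [this, LinearMap.lTensor_comp, LinearMap.comp_apply, hη, map_zero]

end Phi

section Square

variable {R : Type*} (S : Type*) {A : Type*} [CommRing R] [CommRing S] [Algebra R S]
  [Ring A] [Algebra R A]

/-- The canonical `S`-linear equivalence `S ⊗ (A ⊗ Aᵒᵖ) ≃ (S ⊗ A) ⊗_S (S ⊗ A)ᵒᵖ`. -/
noncomputable def azE : S ⊗[R] (A ⊗[R] Aᵐᵒᵖ) ≃ₗ[S] (S ⊗[R] A) ⊗[S] (S ⊗[R] A)ᵐᵒᵖ :=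
  (TensorProduct.AlgebraTensorModule.distribBaseChange R S A Aᵐᵒᵖ).trans
    (TensorProduct.congr (LinearEquiv.refl S (S ⊗[R] A))
      ((TensorProduct.AlgebraTensorModule.congr (LinearEquiv.refl S S)
          (opLinearEquiv R (M := A)).symm).trans
        (opLinearEquiv S (M := S ⊗[R] A))))

set_option maxHeartbeats 2000000 in
set_option synthInstance.maxHeartbeats 400000 in
lemma azE_tmul (s : S) (a : A) (b : Aᵐᵒᵖ) :
    azE S (s ⊗ₜ (a ⊗ₜ b)) = (s ⊗ₜ[R] a) ⊗ₜ[S] (op (1 ⊗ₜ[R] unop b)) := by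
  have hd : TensorProduct.AlgebraTensorModule.distribBaseChange R S A Aᵐᵒᵖ
      (s ⊗ₜ (a ⊗ₜ b)) = (s ⊗ₜ[R] a) ⊗ₜ[S] ((1 : S) ⊗ₜ[R] b) := by
    have h1 : (TensorProduct.AlgebraTensorModule.distribBaseChange R S A Aᵐᵒᵖ).symm
        ((s ⊗ₜ[R] a) ⊗ₜ[S] ((1 : S) ⊗ₜ[R] b)) = s ⊗ₜ (a ⊗ₜ b) := by
      simp [TensorProduct.AlgebraTensorModule.distribBaseChange]
    rw [← h1, LinearEquiv.apply_symm_apply]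
  rw [azE, LinearEquiv.trans_apply, hd, TensorProduct.congr_tmul]
  simp

set_option maxHeartbeats 2000000 in
set_option synthInstance.maxHeartbeats 400000 in
lemma square (z : S ⊗[R] (A ⊗[R] Aᵐᵒᵖ)) :
    LinearMap.tensorProduct R S A A
        (LinearMap.lTensor S (sandwichMap R A).toLinearMap z)
      = (sandwichMap S (S ⊗[R] A)) (azE S z) := by
  induction z with
  | zero => rw [map_zero, map_zero, map_zero, map_zero]
  | add z₁ z₂ h₁ h₂ => rw [map_add, map_add, map_add, map_add, h₁, h₂]
  | tmul s w =>
    induction w with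
    | zero => rw [tmul_zero, map_zero, map_zero, map_zero, map_zero]
    | add w₁ w₂ h₁ h₂ => rw [tmul_add, map_add, map_add, map_add, map_add, h₁, h₂]
    | tmul a b =>
      rw [azE_tmul]
      apply LinearMap.ext
      intro x
      induction x with
      | zero => rw [map_zero, map_zero]
      | add x y hx hy => rw [map_add, map_add, hx, hy]
      | tmul t c =>
        simp only [LinearMap.lTensor_tmul, AlgHom.toLinearMap_apply,
          LinearMap.tensorProduct_apply, TensorProduct.liftAux_tmul]
        rw [sandwichMap, sandwichMap]
        simp only [Algebra.TensorProduct.lift_tmul, mulRightAlgHom, AlgHom.coe_mk,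
          RingHom.coe_mk, MonoidHom.coe_mk, OneHom.coe_mk, LinearMap.smul_apply,
          LinearMap.coe_mk, AddHom.coe_mk, LinearMap.baseChangeHom_apply,
          LinearMap.baseChange_tmul, Module.End.mul_apply, Algebra.coe_lmul_eq_mul,
          LinearMap.mul_apply', LinearMap.mulRight_apply, unop_op]
        simp [Algebra.TensorProduct.tmul_mul_tmul, smul_tmul', smul_eq_mul, mul_one,
          mul_assoc]

end Square

/-- Faithfully flat descent of the Azumaya condition: if `R → S` is faithfully flat,
`A` is a finitely generated projective `R`-module, and `S ⊗_R A` is Azumaya over `S`,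
then `A` is Azumaya over `R`. -/
theorem isAzumayaAlgebra_of_faithfullyFlat_baseChange
    (S : Type*) [CommRing S] [Algebra R S] [Module.FaithfullyFlat R S]
    (hfin : Module.Finite R A) (hproj : Module.Projective R A)
    (h : IsAzumayaAlgebra S (S ⊗[R] A)) :
    IsAzumayaAlgebra R A := by
  obtain ⟨-, -, hfaith, hbij⟩ := h
  refine ⟨hfin, hproj, ?_, ?_⟩
  · -- faithfulness
    constructor
    intro r r' hrr
    have h1 : algebraMap R A r = algebraMap R A r' := by
      simpa [Algebra.smul_def] using hrr 1
    by_contra hne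
    set d := r - r' with hd
    have hd0 : d ≠ 0 := sub_ne_zero.mpr hne
    have hA : algebraMap R A d = 0 := by
      simp [hd, map_sub, h1]
    have h2 : algebraMap S (S ⊗[R] A) (algebraMap R S d) = 0 := by
      have e1 : algebraMap S (S ⊗[R] A) (algebraMap R S d)
          = (1 : S) ⊗ₜ[R] (algebraMap R A d) :=
        calc algebraMap S (S ⊗[R] A) (algebraMap R S d)
            = (algebraMap R S d) • ((1 : S) ⊗ₜ[R] (1 : A)) := by
              rw [Algebra.algebraMap_eq_smul_one, Algebra.TensorProduct.one_def]
          _ = d • ((1 : S) ⊗ₜ[R] (1 : A)) := algebraMap_smul S d _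
          _ = (1 : S) ⊗ₜ[R] (d • (1 : A)) := (TensorProduct.tmul_smul d 1 1).symm
          _ = (1 : S) ⊗ₜ[R] (algebraMap R A d) := by rw [Algebra.algebraMap_eq_smul_one]
      rw [e1, hA, tmul_zero]
    have h3 : algebraMap R S d = 0 := by
      apply eq_of_smul_eq_smul (α := S ⊗[R] A)
      intro m
      rw [Algebra.smul_def, h2, zero_mul, zero_smul]
    have hz : ∀ z : S ⊗[R] R, d • z = 0 := by
      intro z
      induction z with
      | zero => simp
      | tmul s x =>
        rw [smul_tmul', Algebra.smul_def, h3, zero_mul, zero_tmul]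
      | add x y hx hy => rw [smul_add, hx, hy, add_zero]
    have hf : (d • (LinearMap.id : R →ₗ[R] R)) = 0 := by
      rw [Module.FaithfullyFlat.zero_iff_lTensor_zero R S,
        LinearMap.lTensor_smul, LinearMap.lTensor_id]
      apply LinearMap.ext
      intro z
      simpa using hz z
    have := LinearMap.congr_fun hf (1 : R)
    simp at this
    exact hd0 this
  · -- bijectivity
    apply bijective_of_lTensor_bijective S (sandwichMap R A).toLinearMap
    have hΦinj : Function.Injective (LinearMap.tensorProduct R S A A) :=
      tensorProduct_injective
    constructor
    · intro x y hxy
      apply (azE S (A := A)).injective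
      apply hbij.1
      rw [← square, ← square, hxy]
    · intro y
      obtain ⟨w, hw⟩ := hbij.2 (LinearMap.tensorProduct R S A A y)
      obtain ⟨z, hz⟩ := (azE S (A := A)).surjective w
      refine ⟨z, hΦinj ?_⟩
      rw [square, hz, hw]
end

section
/- Let R be a commutative ring whose only idempotents are 0 and 1 (R is connected), and let A be an Azumaya algebra over R. Then the center of A equals R·1, i.e., the structure map R → Z(A) is an isomorphism. -/
open TensorProduct MulOpposite

variable (R A : Type*) [CommRing R] [Ring A] [Algebra R A]

theorem commute_lmul_center
    (hsurj : Function.Surjective (sandwichMap R A)) {z : A}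
    (hz : ∀ b : A, b * z = z * b) (ψ : Module.End R A) :
    ψ * (Algebra.lmul R A z) = (Algebra.lmul R A z) * ψ := by
  obtain ⟨t, rfl⟩ := hsurj ψ
  induction t using TensorProduct.induction_on with
  | zero => simp
  | tmul a b =>
    rw [show (a ⊗ₜ[R] b : A ⊗[R] Aᵐᵒᵖ) = a ⊗ₜ[R] (op b.unop) by simp]
    rw [show sandwichMap R A (a ⊗ₜ[R] (op b.unop))
        = (Algebra.lmul R A a) * (LinearMap.mulRight R b.unop) from
      Algebra.TensorProduct.lift_tmul _ _ _ _ _]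
    ext x
    simp only [Module.End.mul_apply, LinearMap.mulRight_apply,
      Algebra.coe_lmul_eq_mul, LinearMap.mul_apply']
    calc a * (z * x * b.unop) = a * z * (x * b.unop) := by
          rw [mul_assoc z x, ← mul_assoc a z]
      _ = z * a * (x * b.unop) := by rw [hz a]
      _ = z * (a * (x * b.unop)) := by rw [mul_assoc]
  | add s t hs ht =>
    rw [map_add, add_mul, mul_add, hs, ht]

/-- Over a connected commutative ring (one whose only idempotents are `0` and `1`),
the center of an Azumaya algebra `A` is exactly `R·1`: the structure map `R → Z(A)`
is an isomorphism, i.e. it is injective and its range is the whole center. -/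
theorem center_of_azumaya_eq_base
    (hconn : ∀ e : R, e * e = e → e = 0 ∨ e = 1)
    (h : IsAzumayaAlgebra R A) :
    Function.Injective (algebraMap R A) ∧
      Subalgebra.center R A = ⊥ := by
  obtain ⟨hfin, hproj, hfaith, hinj, hsurj⟩ := h
  constructor
  · intro r s hrs
    refine hfaith.eq_of_smul_eq_smul (fun a : A => ?_)
    rw [Algebra.smul_def, Algebra.smul_def, hrs]
  -- construct a finite dual basis
  obtain ⟨n, π, hπ⟩ := Module.Finite.exists_fin' R A
  obtain ⟨σ, hσ⟩ := Module.projective_lifting_property π LinearMap.id hπ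
  set g : Fin n → (A →ₗ[R] R) := fun i => (LinearMap.proj i).comp σ with hg
  set x : Fin n → A := fun i => π (Pi.single i 1) with hx
  have hdual : ∀ a : A, ∑ i, g i a • x i = a := by
    intro a
    have h2 : π (σ a) = a := by
      have := congrArg (fun f : A →ₗ[R] A => f a) hσ
      simpa using this
    calc ∑ i, g i a • x i
        = ∑ i, π ((σ a i) • (Pi.single i 1 : Fin n → R)) := by
          refine Finset.sum_congr rfl fun i _ => ?_
          rw [map_smul]
          rfl
      _ = π (∑ i, (σ a i) • (Pi.single i 1 : Fin n → R)) := (map_sum π _ _).symm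
      _ = π (σ a) := by
            congr 1
            ext j
            simp [Finset.sum_apply, Pi.single_apply]
      _ = a := h2
  -- the trace ideal
  set F : Fin n × Fin n → R := fun p => g p.1 (x p.2) with hF
  set I : Ideal R := Ideal.span (Set.range F) with hI
  have hmemI : ∀ (i : Fin n) (a : A), g i a ∈ I := by
    intro i a
    have hrepr : g i a = ∑ j, g j a * F (i, j) := by
      conv_lhs => rw [← hdual a]
      rw [map_sum]
      refine Finset.sum_congr rfl fun j _ => ?_
      rw [map_smul, smul_eq_mul]
    rw [hrepr]
    exact Ideal.sum_mem _ fun j _ =>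
      Ideal.mul_mem_left _ _ (Ideal.subset_span ⟨(i, j), rfl⟩)
  have hIfg : I.FG := Submodule.fg_span (Set.finite_range F)
  have hle : I ≤ I • I := by
    rw [hI, Ideal.span_le]
    rintro - ⟨p, rfl⟩
    have hp : g p.1 (x p.2) = ∑ k, (g k (x p.2) * g p.1 (x k)) := by
      conv_lhs => rw [← hdual (x p.2)]
      rw [map_sum]
      refine Finset.sum_congr rfl fun k _ => ?_
      rw [map_smul, smul_eq_mul]
    show F p ∈ I • I
    rw [Ideal.smul_eq_mul]
    have hFp : F p = g p.1 (x p.2) := rfl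
    rw [hFp, hp]
    exact Ideal.sum_mem _ fun k _ =>
      Ideal.mul_mem_mul (hmemI _ _) (Ideal.subset_span ⟨(p.1, k), rfl⟩)
  obtain ⟨r, hr1, hr0⟩ :=
    Submodule.exists_sub_one_mem_and_smul_eq_zero_of_fg_of_le_smul I I hIfg hle
  have heI : (1 : R) - r ∈ I := by
    have := I.neg_mem hr1
    simpa using this
  have hee : ((1:R) - r) * ((1:R) - r) = (1:R) - r := by
    have h0 : r • ((1:R) - r) = 0 := hr0 _ heI
    rw [smul_eq_mul] at h0
    linear_combination -h0
  rcases hconn _ hee with he0 | he1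
  · -- the trace ideal is zero, hence A = 0, and everything is trivial
    have hr : r = 1 := by linear_combination -he0
    have hI0 : ∀ c ∈ I, c = 0 := by
      intro c hc
      have := hr0 c hc
      rwa [hr, one_smul] at this
    have hA0 : ∀ a : A, a = 0 := by
      intro a
      rw [← hdual a]
      refine Finset.sum_eq_zero fun i _ => ?_
      rw [hI0 _ (hmemI i a), zero_smul]
    refine le_antisymm (fun w _ => ?_) bot_le
    rw [Algebra.mem_bot]
    exact ⟨0, by rw [map_zero, hA0 w]⟩
  · -- the trace ideal is all of R
    have h1I : (1 : R) ∈ I := by rw [← he1]; exact heI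
    rw [hI, Ideal.mem_span_range_iff_exists_fun] at h1I
    obtain ⟨c, hc⟩ := h1I
    refine le_antisymm (fun z hz => ?_) bot_le
    have hz' : ∀ b : A, b * z = z * b := Subalgebra.mem_center_iff.mp hz
    -- key relation: φ w • z = φ (z * w) • 1
    have key : ∀ (φ : A →ₗ[R] R) (w : A), φ w • z = φ (z * w) • (1 : A) := by
      intro φ w
      have hcom := commute_lmul_center R A hsurj hz' (φ.smulRight (1 : A))
      have happ := congrArg (fun f : Module.End R A => f w) hcom
      simp only [Module.End.mul_apply, LinearMap.smulRight_apply,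
        Algebra.coe_lmul_eq_mul, LinearMap.mul_apply'] at happ
      have hms : z * (φ w • (1:A)) = φ w • z := by rw [mul_smul_comm, mul_one]
      rw [← hms]
      exact happ.symm
    have hzval : z = algebraMap R A (∑ p, c p * g p.1 (z * x p.2)) := by
      calc z = (1 : R) • z := (one_smul R z).symm
        _ = (∑ p, c p * F p) • z := by rw [hc]
        _ = ∑ p, (c p * F p) • z := Finset.sum_smul
        _ = ∑ p, c p • (F p • z) := by
              refine Finset.sum_congr rfl fun p _ => ?_
              rw [mul_smul]
        _ = ∑ p, c p • (g p.1 (z * x p.2) • (1 : A)) := by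
              refine Finset.sum_congr rfl fun p _ => ?_
              rw [hF, key (g p.1) (x p.2)]
        _ = ∑ p, (c p * g p.1 (z * x p.2)) • (1 : A) := by
              refine Finset.sum_congr rfl fun p _ => ?_
              rw [mul_smul]
        _ = (∑ p, c p * g p.1 (z * x p.2)) • (1 : A) := Finset.sum_smul.symm
        _ = algebraMap R A (∑ p, c p * g p.1 (z * x p.2)) := by
              rw [Algebra.algebraMap_eq_smul_one]
    rw [Algebra.mem_bot]
    exact ⟨_, hzval.symm⟩
end

section
/- Let R be a commutative ring and let A, B be Azumaya algebras over R. Then A ⊗_R B is an Azumaya algebra over R, and A ⊗_R A^op is isomorphic, as an R-algebra, to End_R(A). Consequently, the set of Morita-equivalence classes of Azumaya algebras over R forms an abelian group under tensor product, with inverse given by the opposite algebra. -/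
open TensorProduct MulOpposite

variable (R A : Type*) [CommRing R] [Ring A] [Algebra R A]

/-- `homTensorHomMap` is bijective when the source modules are f.g. projective. -/
lemma htm_bijective (R M N P Q : Type*) [CommRing R]
    [AddCommGroup M] [AddCommGroup N] [AddCommGroup P] [AddCommGroup Q]
    [Module R M] [Module R N] [Module R P] [Module R Q]
    [Module.Finite R M] [Module.Projective R M]
    [Module.Finite R N] [Module.Projective R N] :
    Function.Bijective (homTensorHomMap (RingHom.id R) M N P Q) := by
  obtain ⟨m, fM, gM, -, -, hM⟩ := Module.Finite.exists_comp_eq_id_of_projective R M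
  obtain ⟨n, fN, gN, -, -, hN⟩ := Module.Finite.exists_comp_eq_id_of_projective R N
  set F := Fin m → R
  set G := Fin n → R
  let i₁ : (M →ₗ[R] P) ⊗[R] (N →ₗ[R] Q) →ₗ[R] (F →ₗ[R] P) ⊗[R] (G →ₗ[R] Q) :=
    TensorProduct.map (LinearMap.lcomp R P fM) (LinearMap.lcomp R Q fN)
  let r₁ : (F →ₗ[R] P) ⊗[R] (G →ₗ[R] Q) →ₗ[R] (M →ₗ[R] P) ⊗[R] (N →ₗ[R] Q) :=
    TensorProduct.map (LinearMap.lcomp R P gM) (LinearMap.lcomp R Q gN)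
  let i₂ : (M ⊗[R] N →ₗ[R] P ⊗[R] Q) →ₗ[R] (F ⊗[R] G →ₗ[R] P ⊗[R] Q) :=
    LinearMap.lcomp R _ (TensorProduct.map fM fN)
  let r₂ : (F ⊗[R] G →ₗ[R] P ⊗[R] Q) →ₗ[R] (M ⊗[R] N →ₗ[R] P ⊗[R] Q) :=
    LinearMap.lcomp R _ (TensorProduct.map gM gN)
  have hr₁i₁ : r₁ ∘ₗ i₁ = LinearMap.id := by
    refine TensorProduct.ext' fun f g => ?_
    simp only [i₁, r₁, LinearMap.coe_comp, Function.comp_apply, TensorProduct.map_tmul,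
      LinearMap.lcomp_apply', LinearMap.id_coe, id_eq]
    rw [LinearMap.comp_assoc, LinearMap.comp_assoc, hM, hN, LinearMap.comp_id,
      LinearMap.comp_id]
  have hr₂i₂ : r₂ ∘ₗ i₂ = LinearMap.id := by
    ext h : 1
    simp only [r₂, i₂, LinearMap.coe_comp, Function.comp_apply, LinearMap.lcomp_apply',
      LinearMap.id_coe, id_eq]
    rw [LinearMap.comp_assoc, ← TensorProduct.map_comp, hM, hN, TensorProduct.map_id,
      LinearMap.comp_id]
  have sqA : (homTensorHomMap (RingHom.id R) F G P Q) ∘ₗ i₁ = i₂ ∘ₗ (homTensorHomMap (RingHom.id R) M N P Q) := by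
    refine TensorProduct.ext' fun f g => ?_
    simp only [i₁, i₂, LinearMap.coe_comp, Function.comp_apply, TensorProduct.map_tmul,
      LinearMap.lcomp_apply', homTensorHomMap_apply]
    rw [← TensorProduct.map_comp]
  have sqB : (homTensorHomMap (RingHom.id R) M N P Q) ∘ₗ r₁ = r₂ ∘ₗ (homTensorHomMap (RingHom.id R) F G P Q) := by
    refine TensorProduct.ext' fun f g => ?_
    simp only [r₁, r₂, LinearMap.coe_comp, Function.comp_apply, TensorProduct.map_tmul,
      LinearMap.lcomp_apply', homTensorHomMap_apply]
    rw [← TensorProduct.map_comp]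
  have hF : Function.Bijective (homTensorHomMap (RingHom.id R) F G P Q) := by
    have h : ⇑(homTensorHomMap (RingHom.id R) F G P Q) = ⇑(homTensorHomEquiv R F G P Q) :=
      funext fun x => (homTensorHomEquiv_apply x).symm
    rw [h]
    exact (homTensorHomEquiv R F G P Q).bijective
  constructor
  · intro x y hxy
    have h1 : (homTensorHomMap (RingHom.id R) F G P Q) (i₁ x) = (homTensorHomMap (RingHom.id R) F G P Q) (i₁ y) := by
      have := congrArg i₂ hxy
      rwa [← LinearMap.comp_apply, ← LinearMap.comp_apply, ← sqA,
        LinearMap.comp_apply, LinearMap.comp_apply] at this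
    have h2 : i₁ x = i₁ y := hF.injective h1
    have := congrArg r₁ h2
    rwa [← LinearMap.comp_apply, ← LinearMap.comp_apply, hr₁i₁,
      LinearMap.id_apply, LinearMap.id_apply] at this
  · intro y
    obtain ⟨z, hz⟩ := hF.surjective (i₂ y)
    refine ⟨r₁ z, ?_⟩
    rw [← LinearMap.comp_apply, sqB, LinearMap.comp_apply, hz,
      ← LinearMap.comp_apply, hr₂i₂, LinearMap.id_apply]

lemma faithful_algebraMap_inj (R S : Type*) [CommRing R] [Ring S] [Algebra R S]
    [FaithfulSMul R S] : Function.Injective (algebraMap R S) := fun r s h =>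
  FaithfulSMul.eq_of_smul_eq_smul (M := R) (α := S) fun a => by
    rw [Algebra.smul_def, Algebra.smul_def, h]

@[simp] lemma ATM_curry_apply {R A M N P : Type*} [CommSemiring R] [Semiring A] [Algebra R A]
    [AddCommMonoid M] [Module R M] [Module A M] [IsScalarTower R A M]
    [AddCommMonoid N] [Module R N] [AddCommMonoid P] [Module R P] [Module A P]
    [IsScalarTower R A P] (f : M ⊗[R] N →ₗ[A] P) (m : M) (n : N) :
    TensorProduct.AlgebraTensorModule.curry f m n = f (m ⊗ₜ n) := rfl

section aux
variable (B : Type*) [Ring B] [Algebra R B]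

/-- The endomorphism-tensor algebra map in the homogeneous case. -/
noncomputable def myE : Module.End R A ⊗[R] Module.End R B →ₐ[R] Module.End R (A ⊗[R] B) :=
  Module.endTensorEndAlgHom (R := R) (S := R) (A := R) (M := A) (N := B)

/-- The shuffle `(A ⊗ B) ⊗ (A ⊗ B)ᵐᵒᵖ ≃ (A ⊗ Aᵐᵒᵖ) ⊗ (B ⊗ Bᵐᵒᵖ)`. -/
noncomputable def myPhi : ((A ⊗[R] B) ⊗[R] (A ⊗[R] B)ᵐᵒᵖ) ≃ₐ[R] (A ⊗[R] Aᵐᵒᵖ) ⊗[R] (B ⊗[R] Bᵐᵒᵖ) :=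
  (Algebra.TensorProduct.congr AlgEquiv.refl (Algebra.TensorProduct.opAlgEquiv R R A B).symm).trans
    (Algebra.TensorProduct.tensorTensorTensorComm R R R R A B Aᵐᵒᵖ Bᵐᵒᵖ)

set_option linter.unusedSectionVars false in
/-- The sandwich map of a tensor product factors through the sandwich maps of the factors. -/
theorem sandwich_factor : sandwichMap R (A ⊗[R] B) =
    ((myE R A B).comp (Algebra.TensorProduct.map (sandwichMap R A) (sandwichMap R B))).comp
      (myPhi R A B).toAlgHom := by
  ext
  case ha.ha a a' b' =>
    simp [myE, myPhi, sandwichMap, mulRightAlgHom, Algebra.TensorProduct.lift_tmul,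
      Module.endTensorEndAlgHom_apply, Algebra.TensorProduct.tensorTensorTensorComm_tmul,
      Algebra.TensorProduct.one_def]
  case ha.hb b a b' =>
    simp [myE, myPhi, sandwichMap, mulRightAlgHom, Algebra.TensorProduct.lift_tmul,
      Module.endTensorEndAlgHom_apply, Algebra.TensorProduct.tensorTensorTensorComm_tmul,
      Algebra.TensorProduct.one_def]
  case hb x a b =>
    obtain ⟨z, rfl⟩ : ∃ z, x = op z := ⟨unop x, rfl⟩
    induction z using TensorProduct.induction_on with
    | zero => simp only [ATM_curry_apply, op_zero, map_zero, LinearMap.zero_apply]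
    | tmul a' b' =>
      simp [myE, myPhi, sandwichMap, mulRightAlgHom, Algebra.TensorProduct.lift_tmul,
        Module.endTensorEndAlgHom_apply, Algebra.TensorProduct.tensorTensorTensorComm_tmul,
        Algebra.TensorProduct.one_def, Algebra.TensorProduct.tmul_mul_tmul]
    | add u v hu hv =>
      simp only [ATM_curry_apply, op_add, map_add, LinearMap.add_apply] at hu hv ⊢
      rw [hu, hv]

end aux

/-- The tensor product of two Azumaya algebras over `R` is Azumaya, and `A ⊗_R A^op` is
isomorphic as an `R`-algebra to `End_R(A)`; these are the two facts underlying the group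
structure (with inverse given by the opposite algebra) on Brauer classes of Azumaya
algebras. -/
theorem tensor_azumaya_and_inverse
    (B : Type*) [Ring B] [Algebra R B]
    (hA : IsAzumayaAlgebra R A) (hB : IsAzumayaAlgebra R B) :
    IsAzumayaAlgebra R (A ⊗[R] B) ∧
      Nonempty ((A ⊗[R] Aᵐᵒᵖ) ≃ₐ[R] Module.End R A) := by
  obtain ⟨hAf, hAp, hAs, hAb⟩ := hA
  obtain ⟨hBf, hBp, hBs, hBb⟩ := hB
  refine ⟨⟨?_, ?_, ?_, ?_⟩, ⟨AlgEquiv.ofBijective (sandwichMap R A) hAb⟩⟩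
  · exact Module.Finite.tensorProduct R A B
  · exact Module.Projective.tensorProduct
  · -- faithfulness: `algebraMap R (A ⊗ B)` is injective
    have hBinj : Function.Injective (algebraMap R B) := faithful_algebraMap_inj R B
    have hAinj : Function.Injective (algebraMap R A) := faithful_algebraMap_inj R A
    have h1 : Function.Injective (LinearMap.lTensor A (Algebra.linearMap R B)) :=
      Module.Flat.lTensor_preserves_injective_linearMap _ hBinj
    have hincl : Function.Injective (fun a : A => a ⊗ₜ[R] (1 : B)) := by
      have hkey : ∀ a : A,
          (LinearMap.lTensor A (Algebra.linearMap R B)) ((TensorProduct.rid R A).symm a)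
            = a ⊗ₜ[R] (1 : B) := by
        intro a
        simp [TensorProduct.rid_symm_apply]
      intro a a' h
      have hba : (LinearMap.lTensor A (Algebra.linearMap R B)) ((TensorProduct.rid R A).symm a) =
          (LinearMap.lTensor A (Algebra.linearMap R B)) ((TensorProduct.rid R A).symm a') := by
        rw [hkey, hkey]; exact h
      exact (TensorProduct.rid R A).symm.injective (h1 hba)
    have hinj : Function.Injective (algebraMap R (A ⊗[R] B)) := by
      intro r s h
      rw [Algebra.TensorProduct.algebraMap_apply, Algebra.TensorProduct.algebraMap_apply] at h
      exact hAinj (hincl h)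
    exact ⟨fun {r s} h => hinj (by
      rw [Algebra.algebraMap_eq_smul_one, Algebra.algebraMap_eq_smul_one]
      exact h 1)⟩
  · -- bijectivity of the sandwich map of the tensor product
    have hE : Function.Bijective ⇑(myE R A B) := by
      have h1 : (myE R A B).toLinearMap = homTensorHomMap (RingHom.id R) A B A B := by
        refine TensorProduct.ext' fun f g => ?_
        refine TensorProduct.ext' fun a b => ?_
        rfl
      have h2 : ⇑(myE R A B) = ⇑(homTensorHomMap (RingHom.id R) A B A B) := by
        rw [← h1]; rfl
      rw [h2]
      exact htm_bijective R A B A B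
    have hmap :
        Function.Bijective ⇑(Algebra.TensorProduct.map (sandwichMap R A) (sandwichMap R B)) := by
      have h : ⇑(Algebra.TensorProduct.map (sandwichMap R A) (sandwichMap R B)) =
          ⇑(TensorProduct.map (sandwichMap R A).toLinearMap (sandwichMap R B).toLinearMap) := rfl
      rw [h]
      have hcongr : ⇑(TensorProduct.map (sandwichMap R A).toLinearMap
            (sandwichMap R B).toLinearMap) =
          ⇑(TensorProduct.congr (LinearEquiv.ofBijective (sandwichMap R A).toLinearMap hAb)
            (LinearEquiv.ofBijective (sandwichMap R B).toLinearMap hBb)) := rfl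
      rw [hcongr]
      exact (TensorProduct.congr _ _).bijective
    have hfactor : ⇑(sandwichMap R (A ⊗[R] B)) =
        ⇑(myE R A B) ∘ ⇑(Algebra.TensorProduct.map (sandwichMap R A) (sandwichMap R B)) ∘
          ⇑(myPhi R A B) := by
      rw [sandwich_factor R A B]; rfl
    rw [hfactor]
    exact hE.comp (hmap.comp (myPhi R A B).bijective)
end

section
/- Let R → S be a faithfully flat ring map of commutative rings and let M be an R-module. If M ⊗_R S is a finitely generated projective S-module, then M is a finitely generated projective R-module. -/
open TensorProduct

section aux
variable (R S : Type*) [CommRing R] [CommRing S] [Algebra R S] [Module.FaithfullyFlat R S]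

lemma aux_inj_descend {A B : Type*} [AddCommGroup A] [Module R A] [AddCommGroup B] [Module R B]
    (f : A →ₗ[R] B) (h : Function.Injective (LinearMap.lTensor S f)) : Function.Injective f := by
  have h0 : ∀ x : A, f x = 0 → x = 0 := by
    intro x hx
    have h2 : (1 : S) ⊗ₜ[R] x = (0 : S ⊗[R] A) := by
      apply h
      simp [hx]
    have h3 : LinearMap.lTensor S (LinearMap.toSpanSingleton R A x) = 0 := by
      apply TensorProduct.ext'
      intro s r
      simp only [LinearMap.lTensor_tmul, LinearMap.toSpanSingleton_apply, LinearMap.zero_apply]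
      have hsx : s ⊗ₜ[R] x = s • ((1 : S) ⊗ₜ[R] x) := by
        rw [smul_tmul', smul_eq_mul, mul_one]
      rw [tmul_smul, hsx, h2, smul_zero, smul_zero]
    have h4 := (Module.FaithfullyFlat.zero_iff_lTensor_zero R S
      (LinearMap.toSpanSingleton R A x)).2 h3
    simpa using congr($h4 (1 : R))
  intro a b hab
  rw [← sub_eq_zero]
  exact h0 _ (by rw [map_sub, hab, sub_self])

lemma aux_finite_descend (M : Type*) [AddCommGroup M] [Module R M]
    (hfin : Module.Finite S (S ⊗[R] M)) : Module.Finite R M := by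
  obtain ⟨T, hT⟩ := hfin.fg_top
  obtain ⟨N, hN, hsub⟩ := TensorProduct.exists_finite_submodule_right_of_setFinite
    (T : Set (S ⊗[R] M)) T.finite_toSet
  have hsurj : Function.Surjective (N.subtype.lTensor S) := by
    have hr : LinearMap.range (N.subtype.baseChange S) = ⊤ := by
      rw [eq_top_iff, ← hT, Submodule.span_le]
      intro x hx
      obtain ⟨y, hy⟩ := hsub hx
      exact ⟨y, by rw [← hy]; rw [LinearMap.baseChange_eq_ltensor]⟩
    intro x
    obtain ⟨y, hy⟩ := LinearMap.range_eq_top.mp hr x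
    exact ⟨y, by rw [← hy, ← LinearMap.baseChange_eq_ltensor]⟩
  have hsub2 : Subsingleton (S ⊗[R] (M ⧸ N)) := by
    constructor
    have key : ∀ a : S ⊗[R] (M ⧸ N), a = 0 := by
      intro a
      obtain ⟨x, rfl⟩ := LinearMap.lTensor_surjective S (Submodule.mkQ_surjective N) a
      obtain ⟨z, rfl⟩ := hsurj x
      rw [← LinearMap.comp_apply, ← LinearMap.lTensor_comp]
      have : N.mkQ ∘ₗ N.subtype = 0 := by ext n; simp
      rw [this, LinearMap.lTensor_zero, LinearMap.zero_apply]
    intro a b; rw [key a, key b]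
  have hsub3 : Subsingleton (M ⧸ N) :=
    Module.FaithfullyFlat.lTensor_reflects_triviality R S (M ⧸ N)
  have htop : N = ⊤ := Submodule.Quotient.subsingleton_iff.mp hsub3
  have : N.FG := Module.Finite.iff_fg.mp hN
  rw [htop] at this
  exact ⟨this⟩

lemma aux_flat_descend (M : Type*) [AddCommGroup M] [Module R M]
    (hf : Module.Flat S (S ⊗[R] M)) : Module.Flat R M := by
  rw [Module.Flat.iff_rTensor_injective']
  intro I
  apply aux_inj_descend R S
  have hinj : Function.Injective (I.subtype.baseChange S) := by
    rw [LinearMap.baseChange_eq_ltensor]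
    exact Module.Flat.lTensor_preserves_injective_linearMap I.subtype
      (Submodule.injective_subtype I)
  have h2 : Function.Injective
      (LinearMap.rTensor (S ⊗[R] M) (I.subtype.baseChange S) :
        (S ⊗[R] I) ⊗[S] (S ⊗[R] M) →ₗ[S] (S ⊗[R] R) ⊗[S] (S ⊗[R] M)) :=
    Module.Flat.rTensor_preserves_injective_linearMap _ hinj
  let e₁ : S ⊗[R] (I ⊗[R] M) ≃ₗ[R] (S ⊗[R] I) ⊗[S] (S ⊗[R] M) :=
    (TensorProduct.assoc R S I M).symm ≪≫ₗ
      ((AlgebraTensorModule.cancelBaseChange R S S (S ⊗[R] I) M).restrictScalars R).symm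
  let e₂ : S ⊗[R] (R ⊗[R] M) ≃ₗ[R] (S ⊗[R] R) ⊗[S] (S ⊗[R] M) :=
    (TensorProduct.assoc R S R M).symm ≪≫ₗ
      ((AlgebraTensorModule.cancelBaseChange R S S (S ⊗[R] R) M).restrictScalars R).symm
  have key : e₂.toLinearMap ∘ₗ LinearMap.lTensor S ((Submodule.subtype I).rTensor M) =
      ((LinearMap.rTensor (S ⊗[R] M) (I.subtype.baseChange S)).restrictScalars R)
        ∘ₗ e₁.toLinearMap := by
    apply TensorProduct.ext'
    intro s x
    induction x using TensorProduct.induction_on with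
    | zero => simp
    | tmul i m =>
        simp [e₁, e₂, TensorProduct.assoc_symm_tmul,
          AlgebraTensorModule.cancelBaseChange_symm_tmul]
    | add a b ha hb => simp only [tmul_add, map_add, ha, hb]
  have hcomp : Function.Injective
      (e₂.toLinearMap ∘ₗ LinearMap.lTensor S ((Submodule.subtype I).rTensor M)) := by
    rw [key]
    exact h2.comp e₁.injective
  exact fun a b hab => hcomp (by simp only [LinearMap.comp_apply, hab])

end aux

/-- Faithfully flat descent of the property of being a finitely generated projective module:
if `R → S` is faithfully flat and `M ⊗_R S` is finite projective over `S`, then `M` is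
finite projective over `R`. -/
theorem finite_projective_descends_along_faithfully_flat
    (R S : Type*) [CommRing R] [CommRing S] [Algebra R S] [Module.FaithfullyFlat R S]
    (M : Type*) [AddCommGroup M] [Module R M]
    (hfin : Module.Finite S (S ⊗[R] M)) (hproj : Module.Projective S (S ⊗[R] M)) :
    Module.Finite R M ∧ Module.Projective R M := by
  have hfinM : Module.Finite R M := aux_finite_descend R S M hfin
  have hfpS : Module.FinitePresentation S (S ⊗[R] M) :=
    Module.finitePresentation_of_projective S (S ⊗[R] M)
  obtain ⟨n, f, hfsurj⟩ := Module.Finite.exists_fin' R M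
  -- kernel of the base-changed presentation is f.g. over S
  have hbsurj : Function.Surjective (f.baseChange S) := by
    rw [LinearMap.baseChange_eq_ltensor]
    exact LinearMap.lTensor_surjective S hfsurj
  have hkerfg : (LinearMap.ker (f.baseChange S)).FG :=
    Module.FinitePresentation.fg_ker (f.baseChange S) hbsurj
  -- S ⊗ ker f ≃ ker (baseChange f)
  have hexact : Function.Exact ((LinearMap.ker f).subtype.baseChange S) (f.baseChange S) :=
    lTensor_exact S f.exact_subtype_ker_map hfsurj
  have hrange : LinearMap.range ((LinearMap.ker f).subtype.baseChange S) =
      LinearMap.ker (f.baseChange S) := by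
    rw [LinearMap.exact_iff] at hexact
    exact hexact.symm
  have hinj : Function.Injective ((LinearMap.ker f).subtype.baseChange S) := by
    rw [LinearMap.baseChange_eq_ltensor]
    exact Module.Flat.lTensor_preserves_injective_linearMap _
      (Submodule.injective_subtype _)
  have hfinker : Module.Finite S (S ⊗[R] (LinearMap.ker f)) := by
    have e := LinearEquiv.ofInjective ((LinearMap.ker f).subtype.baseChange S) hinj
    have : Module.Finite S (LinearMap.range ((LinearMap.ker f).subtype.baseChange S)) := by
      rw [hrange]
      exact Module.Finite.iff_fg.mpr hkerfg
    exact Module.Finite.equiv e.symm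
  have hKfin : Module.Finite R (LinearMap.ker f) := aux_finite_descend R S _ hfinker
  haveI hfp : Module.FinitePresentation R M :=
    Module.finitePresentation_of_surjective f hfsurj (Module.Finite.iff_fg.mp hKfin)
  haveI hflat : Module.Flat R M := aux_flat_descend R S M inferInstance
  -- fp + flat ⇒ projective, via localization at maximal ideals
  refine ⟨hfinM, ?_⟩
  apply Module.projective_of_localization_maximal
  intro I hI
  haveI : Module.Flat (Localization.AtPrime I) (LocalizedModule I.primeCompl M) := by
    have hbc := (isLocalizedModule_iff_isBaseChange I.primeCompl (Localization.AtPrime I)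
      (LocalizedModule.mkLinearMap I.primeCompl M)).mp inferInstance
    exact Module.Flat.of_linearEquiv hbc.equiv.symm
  haveI : Module.Free (Localization.AtPrime I) (LocalizedModule I.primeCompl M) :=
    Module.free_of_flat_of_isLocalRing
  infer_instance
end
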